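/- arXiv:1602.08472 — 2 statements merged into one kernel-verified Lean document; each statement's English description precedes it below -/
import Mathlib

section
/- Soundness of ExpSOS under HCS model: let N be a squarefree positive integer, p a positive integer, L = p·N, u ∈ Z_N a base, a ≥ 1 an exponent, and r, k ≥ 0 arbitrary. Set U = (u + r·N) mod L and A = a + k·φ(N). Then (U^A mod L) mod N = u^a mod N. -/
lemma expsos_key (N u a k : ℕ) (hsq : Squarefree N) (ha : 1 ≤ a) :
    u ^ (a + k * Nat.totient N) ≡ u ^ a [MOD N] := by
  have hle : u ^ a ≤ u ^ (a + k * Nat.totient N) := by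
    rcases Nat.eq_zero_or_pos u with h0 | h1
    · subst h0; simp [Nat.zero_pow ha]
    · exact Nat.pow_le_pow_right h1 (by omega)
  apply Nat.ModEq.symm
  rw [Nat.modEq_iff_dvd' hle]
  conv_lhs => rw [← Nat.prod_primeFactors_of_squarefree hsq]
  apply Finset.prod_primes_dvd
  · exact fun p hp => (Nat.prime_of_mem_primeFactors hp).prime
  · intro q hq
    have hqp : q.Prime := Nat.prime_of_mem_primeFactors hq
    have hqd : q ∣ N := Nat.dvd_of_mem_primeFactors hq
    rw [← Nat.modEq_iff_dvd' hle]
    apply Nat.ModEq.symm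
    by_cases hqu : q ∣ u
    · have h1 : u ^ a ≡ 0 [MOD q] :=
        (Nat.modEq_zero_iff_dvd).mpr (dvd_pow hqu (by omega))
      have h2 : u ^ (a + k * Nat.totient N) ≡ 0 [MOD q] :=
        (Nat.modEq_zero_iff_dvd).mpr (dvd_pow hqu (by omega))
      exact h2.trans h1.symm
    · have hcop : Nat.Coprime u q := (hqp.coprime_iff_not_dvd.mpr hqu).symm
      have hfer : u ^ Nat.totient q ≡ 1 [MOD q] := Nat.ModEq.pow_totient hcop
      obtain ⟨t, ht⟩ : Nat.totient q ∣ Nat.totient N := Nat.totient_dvd_of_dvd hqd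
      calc u ^ (a + k * Nat.totient N)
          = u ^ a * (u ^ Nat.totient q) ^ (k * t) := by
            rw [← pow_mul, ← pow_add, ht]; ring_nf
        _ ≡ u ^ a * 1 ^ (k * t) [MOD q] := Nat.ModEq.mul_left _ (hfer.pow _)
        _ = u ^ a := by ring

theorem expsos_soundness (N p L u a r k U A : ℕ)
    (hN : 0 < N) (hsq : Squarefree N) (hp : 0 < p) (hL : L = p * N)
    (hu : u < N) (ha : 1 ≤ a)
    (hU : U = (u + r * N) % L) (hA : A = a + k * Nat.totient N) :
    (U ^ A % L) % N = u ^ a % N := by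
  have hNL : N ∣ L := ⟨p, by rw [hL, mul_comm]⟩
  have hUu : U ≡ u [MOD N] := by
    calc U = (u + r * N) % L := hU
      _ ≡ u + r * N [MOD N] := (Nat.mod_modEq _ _).of_dvd hNL
      _ ≡ u + 0 [MOD N] := Nat.ModEq.add_left _ (Nat.modEq_zero_iff_dvd.mpr ⟨r, mul_comm r N⟩)
      _ = u := by ring
  calc (U ^ A % L) % N = U ^ A % N := Nat.mod_mod_of_dvd _ hNL
    _ = u ^ A % N := (hUu.pow A)
    _ = u ^ a % N := by rw [hA]; exact expsos_key N u a k hsq ha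
end

section
/- Recovery of DSA public key: with p prime, g coprime to p, X = x + k1·(p−1), L = Q·p for a prime Q, G = (g + r·p) mod L, the recovered value (G^X mod L) mod p equals g^x mod p. -/
theorem dsa_key_recovery (p g x k1 r Q L X G : ℕ)
    (hp : p.Prime) (hg : Nat.Coprime g p) (hQ : Q.Prime)
    (hL : L = Q * p) (hX : X = x + k1 * (p - 1)) (hG : G = (g + r * p) % L) :
    (G ^ X % L) % p = g ^ x % p := by
  have hpL : p ∣ L := hL ▸ dvd_mul_left p Q
  rw [Nat.mod_mod_of_dvd _ hpL]
  have hGp : G ≡ g [MOD p] := by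
    calc G = (g + r * p) % L := hG
    _ ≡ g + r * p [MOD p] := (Nat.mod_modEq _ L).of_dvd hpL
    _ ≡ g + 0 [MOD p] := Nat.ModEq.add_left g (Nat.modEq_zero_iff_dvd.2 ⟨r, mul_comm r p⟩)
    _ = g := by ring
  have hfermat : g ^ (p - 1) ≡ 1 [MOD p] := by
    have := Nat.ModEq.pow_totient hg
    rwa [Nat.totient_prime hp] at this
  calc G ^ X ≡ g ^ X [MOD p] := hGp.pow X
    _ = g ^ x * (g ^ (p - 1)) ^ k1 := by rw [hX, pow_add, pow_mul']
    _ ≡ g ^ x * 1 ^ k1 [MOD p] := Nat.ModEq.mul_left _ (hfermat.pow k1)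
    _ = g ^ x := by ring
end
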